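/- For every integer d ≥ 4, the quantity (2 − (4/3)d)·2·(d−1)^{2d−1} + (d/3)·∑_{s=1}^{2d−2} 2·(d−2)^{2d−2−s}·(s−1)·C(2d−2, s) + (d/3)·(2d−2)·∑_{s=1}^{2d−3} (d−1)·(d−2)^{2d−3−s}·s·C(2d−3, s) is a negative rational number, where C(n,s) denotes the binomial coefficient. -/

import Mathlib

open Finset

/-- Reversed binomial theorem over ℚ. -/
lemma binom_rev (m : ℕ) (x : ℚ) :
    ∑ t ∈ range (m + 1), x ^ (m - t) * (Nat.choose m t : ℚ) = (x + 1) ^ m := by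
  rw [add_pow, ← Finset.sum_range_reflect]
  apply Finset.sum_congr rfl
  intro j hj
  simp only [Finset.mem_range, Nat.lt_succ_iff] at hj
  rw [Nat.add_sub_cancel, Nat.choose_symm hj, one_pow, Nat.sub_sub_self hj, mul_one]

lemma sum_s_choose (n : ℕ) (hn : 1 ≤ n) (x : ℚ) :
    ∑ s ∈ Icc 1 n, x ^ (n - s) * (s : ℚ) * (Nat.choose n s : ℚ)
      = n * (x + 1) ^ (n - 1) := by
  obtain ⟨m, rfl⟩ : ∃ m, n = m + 1 := ⟨n - 1, by omega⟩
  have h0 : Finset.Icc 1 (m + 1) = (range (m + 2)).erase 0 := by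
    ext a; simp [Nat.lt_succ_iff, Nat.one_le_iff_ne_zero, and_comm]
  rw [h0, Finset.sum_erase _ (by simp), Finset.sum_range_succ']
  have step : ∀ t ∈ range (m + 1),
      x ^ (m + 1 - (t + 1)) * ((t + 1 : ℕ) : ℚ) * ((m + 1).choose (t + 1) : ℚ)
        = ((m + 1 : ℕ) : ℚ) * (x ^ (m - t) * (m.choose t : ℚ)) := by
    intro t _
    have hnat : (m + 1) * m.choose t = (m + 1).choose (t + 1) * (t + 1) :=
      Nat.add_one_mul_choose_eq m t
    have hq : ((m + 1 : ℕ) : ℚ) * (m.choose t : ℚ)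
        = ((m + 1).choose (t + 1) : ℚ) * ((t + 1 : ℕ) : ℚ) := by exact_mod_cast hnat
    have he : m + 1 - (t + 1) = m - t := by omega
    rw [he]; linear_combination (-(x ^ (m - t))) * hq
  rw [Finset.sum_congr rfl step, ← Finset.mul_sum, binom_rev]
  simp

lemma sum_choose' (n : ℕ) (x : ℚ) :
    ∑ s ∈ Icc 1 n, x ^ (n - s) * (Nat.choose n s : ℚ) = (x + 1) ^ n - x ^ n := by
  have h0 : Finset.Icc 1 n = (range (n + 1)).erase 0 := by
    ext a; simp [Nat.lt_succ_iff, Nat.one_le_iff_ne_zero, and_comm]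
  have hb := binom_rev n x
  rw [← Finset.add_sum_erase _ _ (show 0 ∈ range (n + 1) by simp)] at hb
  simp only [Nat.choose_zero_right, Nat.cast_one, mul_one, Nat.sub_zero] at hb
  rw [h0]; linarith

set_option maxHeartbeats 1000000 in

/-- For every integer `d ≥ 4`, the normalized intersection number
`(1/c)·B·π*BN¹_d` from Lemma 4.2,
`(2 − (4/3)d)·2·(d−1)^(2d−1)
  + (d/3)·∑_{s=1}^{2d−2} 2·(d−2)^(2d−2−s)·(s−1)·C(2d−2,s)
  + (d/3)·(2d−2)·∑_{s=1}^{2d−3} (d−1)·(d−2)^(2d−3−s)·s·C(2d−3,s)`,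
is a negative rational number. -/
theorem d_gonal_intersection_negative (d : ℕ) (hd : 4 ≤ d) :
    (2 - (4 / 3) * (d : ℚ)) * 2 * ((d : ℚ) - 1) ^ (2 * d - 1)
      + ((d : ℚ) / 3) * ∑ s ∈ Finset.Icc 1 (2 * d - 2),
          2 * ((d : ℚ) - 2) ^ (2 * d - 2 - s) * ((s : ℚ) - 1) * (Nat.choose (2 * d - 2) s : ℚ)
      + ((d : ℚ) / 3) * (2 * (d : ℚ) - 2) * ∑ s ∈ Finset.Icc 1 (2 * d - 3),
          ((d : ℚ) - 1) * ((d : ℚ) - 2) ^ (2 * d - 3 - s) * (s : ℚ) * (Nat.choose (2 * d - 3) s : ℚ)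
      < 0 := by
  obtain ⟨k, rfl⟩ : ∃ k, d = k + 4 := ⟨d - 4, by omega⟩
  have h1 : 2 * (k + 4) - 1 = 2 * k + 7 := by omega
  have h2 : 2 * (k + 4) - 2 = 2 * k + 6 := by omega
  have h3 : 2 * (k + 4) - 3 = 2 * k + 5 := by omega
  rw [h1, h2, h3]
  set K : ℚ := (k : ℚ) with hK
  have hK0 : 0 ≤ K := Nat.cast_nonneg k
  -- first sum
  have SA : ∑ s ∈ Finset.Icc 1 (2 * k + 6),
      2 * (((k + 4 : ℕ) : ℚ) - 2) ^ (2 * k + 6 - s) * ((s : ℚ) - 1) * (Nat.choose (2 * k + 6) s : ℚ)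
      = 2 * (((2 * k + 6 : ℕ) : ℚ) * (K + 2 + 1) ^ (2 * k + 6 - 1))
        - 2 * ((K + 2 + 1) ^ (2 * k + 6) - (K + 2) ^ (2 * k + 6)) := by
    have step : ∀ s ∈ Finset.Icc 1 (2 * k + 6),
        2 * (((k + 4 : ℕ) : ℚ) - 2) ^ (2 * k + 6 - s) * ((s : ℚ) - 1) * (Nat.choose (2 * k + 6) s : ℚ)
        = 2 * ((K + 2) ^ (2 * k + 6 - s) * (s : ℚ) * (Nat.choose (2 * k + 6) s : ℚ))
          - 2 * ((K + 2) ^ (2 * k + 6 - s) * (Nat.choose (2 * k + 6) s : ℚ)) := by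
      intro s _
      have hb : ((k + 4 : ℕ) : ℚ) - 2 = K + 2 := by push_cast [hK]; ring
      rw [hb]; ring
    rw [Finset.sum_congr rfl step, Finset.sum_sub_distrib, ← Finset.mul_sum, ← Finset.mul_sum,
      sum_s_choose _ (by omega), sum_choose']
  -- second sum
  have SB : ∑ s ∈ Finset.Icc 1 (2 * k + 5),
      (((k + 4 : ℕ) : ℚ) - 1) * (((k + 4 : ℕ) : ℚ) - 2) ^ (2 * k + 5 - s) * (s : ℚ)
        * (Nat.choose (2 * k + 5) s : ℚ)
      = (K + 3) * (((2 * k + 5 : ℕ) : ℚ) * (K + 2 + 1) ^ (2 * k + 5 - 1)) := by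
    have step : ∀ s ∈ Finset.Icc 1 (2 * k + 5),
        (((k + 4 : ℕ) : ℚ) - 1) * (((k + 4 : ℕ) : ℚ) - 2) ^ (2 * k + 5 - s) * (s : ℚ)
          * (Nat.choose (2 * k + 5) s : ℚ)
        = (K + 3) * ((K + 2) ^ (2 * k + 5 - s) * (s : ℚ) * (Nat.choose (2 * k + 5) s : ℚ)) := by
      intro s _
      have hb : ((k + 4 : ℕ) : ℚ) - 2 = K + 2 := by push_cast [hK]; ring
      have ha : ((k + 4 : ℕ) : ℚ) - 1 = K + 3 := by push_cast [hK]; ring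
      rw [hb, ha]; ring
    rw [Finset.sum_congr rfl step, ← Finset.mul_sum, sum_s_choose _ (by omega)]
  rw [SA, SB]
  have e1 : 2 * k + 6 - 1 = 2 * k + 5 := by omega
  have e2 : 2 * k + 5 - 1 = 2 * k + 4 := by omega
  rw [e1, e2]
  -- rewrite all powers of (K+3) in terms of P := (K+3)^(2k+4)
  have hcast : ((k + 4 : ℕ) : ℚ) = K + 4 := by push_cast [hK]; ring
  have hb3 : (K + 2 + 1 : ℚ) = K + 3 := by ring
  rw [hcast, hb3]
  have hm1 : (K + 4 - 1 : ℚ) = K + 3 := by ring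
  rw [hm1]
  have p7 : (K + 3) ^ (2 * k + 7) = (K + 3) ^ 3 * (K + 3) ^ (2 * k + 4) := by
    rw [← pow_add]; congr 1; omega
  have p6 : (K + 3) ^ (2 * k + 6) = (K + 3) ^ 2 * (K + 3) ^ (2 * k + 4) := by
    rw [← pow_add]; congr 1; omega
  have p5 : (K + 3) ^ (2 * k + 5) = (K + 3) * (K + 3) ^ (2 * k + 4) := by
    rw [← pow_succ']
  rw [p7, p6, p5]
  set P : ℚ := (K + 3) ^ (2 * k + 4) with hP
  set Q : ℚ := (K + 2) ^ (2 * k + 6) with hQ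
  have hPpos : 0 < P := by positivity
  have hQP : Q ≤ (K + 3) ^ 2 * P := by
    rw [hQ, hP, ← pow_add, show 2 + (2 * k + 4) = 2 * k + 6 by omega]
    exact pow_le_pow_left₀ (by linarith) (by linarith) _
  have hc1 : ((2 * k + 6 : ℕ) : ℚ) = 2 * K + 6 := by push_cast [hK]; ring
  have hc2 : ((2 * k + 5 : ℕ) : ℚ) = 2 * K + 5 := by push_cast [hK]; ring
  rw [hc1, hc2]
  have key : (2 * (K + 4) / 3) * Q < (4 / 3) * (K + 1) * (K + 3) ^ 3 * P := by
    have step1 : (2 * (K + 4) / 3) * Q ≤ (2 * (K + 4) / 3) * ((K + 3) ^ 2 * P) := by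
      apply mul_le_mul_of_nonneg_left hQP; linarith
    have step2 : (2 * (K + 4) / 3) * ((K + 3) ^ 2 * P) < (4 / 3) * (K + 1) * (K + 3) ^ 3 * P := by
      nlinarith [mul_pos hPpos (show (0:ℚ) < (K + 3) ^ 2 by positivity), sq_nonneg K,
        mul_nonneg (mul_nonneg hK0 hK0) hPpos.le, mul_nonneg hK0 hPpos.le,
        mul_nonneg (mul_nonneg (mul_nonneg hK0 hK0) hK0) hPpos.le]
    linarith
  linarith [key]
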